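/- arXiv:1911.00574 — 3 statements merged into one kernel-verified Lean document; each statement's English description precedes it below -/
import Mathlib

section
/- Let μ and ν be Borel probability measures on ℝⁿ and let Γ ⊂ ℝⁿ × ℝⁿ be a closed set such that for every Borel set O ⊂ ℝⁿ one has μ(O) ≤ ν({y ∈ ℝⁿ : ∃ x ∈ O, (x,y) ∈ Γ}) and ν(O) ≤ μ({x ∈ ℝⁿ : ∃ y ∈ O, (x,y) ∈ Γ}). Then there exists a Borel probability measure π on ℝⁿ × ℝⁿ with first marginal μ and second marginal ν which is concentrated on Γ, i.e. π((ℝⁿ × ℝⁿ) ∖ Γ) = 0. -/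
open MeasureTheory Set Metric Filter
open scoped RealInnerProductSpace ENNReal

noncomputable section

abbrev E (n : ℕ) := EuclideanSpace ℝ (Fin n)

/-- The subdifferential of `ψ` at `x`:
`∂ψ(x) = {z : ψ(y) ≥ ψ(x) + z·(y−x) for all y}`. -/
def subdiff {n : ℕ} (ψ : E n → ℝ) (x : E n) : Set (E n) :=
  {z | ∀ y : E n, ψ x + ⟪z, y - x⟫ ≤ ψ y}

/-- `∂ψ(A) = ⋃_{x ∈ A} ∂ψ(x)`. -/
def subdiffSet {n : ℕ} (ψ : E n → ℝ) (A : Set (E n)) : Set (E n) :=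
  ⋃ x ∈ A, subdiff ψ x

lemma hall_nat {I J : Type*} [Fintype I] [Fintype J] [DecidableEq I] [DecidableEq J]
    (a : I → ℕ) (b : J → ℕ) (R : I → J → Prop) [∀ i j, Decidable (R i j)]
    (hH : ∀ S : Finset I, ∑ i ∈ S, a i ≤ ∑ j ∈ Finset.univ.filter (fun j => ∃ i ∈ S, R i j), b j) :
    ∃ w : I → J → ℕ, (∀ i j, w i j ≠ 0 → R i j) ∧ (∀ i, ∑ j, w i j = a i) ∧
      (∀ j, ∑ i, w i j ≤ b j) := by
  classical
  set ι := Σ i : I, Fin (a i)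
  set κ := Σ j : J, Fin (b j)
  set t : ι → Finset κ := fun σ => Finset.univ.filter (fun τ => R σ.1 τ.1) with ht
  have hall : ∀ s : Finset ι, s.card ≤ (s.biUnion t).card := by
    intro s
    set S : Finset I := s.image Sigma.fst with hS
    set T : Finset J := Finset.univ.filter (fun j => ∃ i ∈ S, R i j) with hT
    have h1 : s ⊆ S.sigma (fun i => Finset.univ) := by
      intro σ hσ
      rw [Finset.mem_sigma]
      exact ⟨Finset.mem_image.2 ⟨σ, hσ, rfl⟩, Finset.mem_univ _⟩
    have h2 : T.sigma (fun j => (Finset.univ : Finset (Fin (b j)))) ⊆ s.biUnion t := by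
      intro τ hτ
      rw [Finset.mem_sigma] at hτ
      obtain ⟨hτT, -⟩ := hτ
      rw [hT, Finset.mem_filter] at hτT
      obtain ⟨-, i, hiS, hR⟩ := hτT
      rw [hS, Finset.mem_image] at hiS
      obtain ⟨σ, hσs, hσi⟩ := hiS
      refine Finset.mem_biUnion.2 ⟨σ, hσs, ?_⟩
      simp [ht, hσi, hR]
    calc s.card ≤ (S.sigma (fun i => (Finset.univ : Finset (Fin (a i))))).card :=
          Finset.card_le_card h1
      _ = ∑ i ∈ S, a i := by simp [Finset.card_sigma]
      _ ≤ ∑ j ∈ T, b j := hH S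
      _ = (T.sigma (fun j => (Finset.univ : Finset (Fin (b j))))).card := by
          simp [Finset.card_sigma]
      _ ≤ (s.biUnion t).card := Finset.card_le_card h2
  obtain ⟨f, hfinj, hft⟩ := (Finset.all_card_le_biUnion_card_iff_exists_injective t).1 hall
  have hfR : ∀ σ : ι, R σ.1 (f σ).1 := by
    intro σ
    have := hft σ
    simpa [ht] using this
  refine ⟨fun i j => (Finset.univ.filter (fun m : Fin (a i) => (f ⟨i, m⟩).1 = j)).card, ?_, ?_, ?_⟩
  · intro i j hw
    obtain ⟨m, hm⟩ := Finset.card_ne_zero.1 hw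
    rw [Finset.mem_filter] at hm
    exact hm.2 ▸ hfR ⟨i, m⟩
  · intro i
    have := Finset.card_eq_sum_card_fiberwise
      (s := (Finset.univ : Finset (Fin (a i)))) (t := (Finset.univ : Finset J))
      (f := fun m => (f ⟨i, m⟩).1) (fun m _ => Finset.mem_univ _)
    simpa using this.symm
  · intro j
    have key : ∑ i, (Finset.univ.filter (fun m : Fin (a i) => (f ⟨i, m⟩).1 = j)).card
        = (Finset.univ.filter (fun σ : ι => (f σ).1 = j)).card := by
      rw [Finset.card_eq_sum_card_fiberwise
        (s := Finset.univ.filter (fun σ : ι => (f σ).1 = j)) (t := (Finset.univ : Finset I))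
        (f := Sigma.fst) (fun σ _ => Finset.mem_univ _)]
      refine Finset.sum_congr rfl (fun i _ => ?_)
      refine Finset.card_bij (fun m _ => (⟨i, m⟩ : ι)) ?_ ?_ ?_
      · intro m hm
        rw [Finset.mem_filter] at hm
        rw [Finset.mem_filter, Finset.mem_filter]
        exact ⟨⟨Finset.mem_univ _, hm.2⟩, rfl⟩
      · intro m₁ h₁ m₂ h₂ h
        simpa using h
      · rintro ⟨i', m⟩ hσ
        rw [Finset.mem_filter, Finset.mem_filter] at hσ
        obtain ⟨⟨-, h1⟩, (h2 : i' = i)⟩ := hσ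
        subst h2
        exact ⟨m, Finset.mem_filter.2 ⟨Finset.mem_univ _, h1⟩, rfl⟩
    rw [key]
    have h1 : (Finset.univ.filter (fun σ : ι => (f σ).1 = j)).card
        ≤ (Finset.univ.filter (fun τ : κ => τ.1 = j)).card := by
      apply Finset.card_le_card_of_injOn f
      · intro σ hσ
        rw [Finset.mem_coe, Finset.mem_filter] at hσ ⊢
        exact ⟨Finset.mem_univ _, hσ.2⟩
      · exact hfinj.injOn
    have h2 : (Finset.univ.filter (fun τ : κ => τ.1 = j)).card = b j := by
      have : (Finset.univ.filter (fun τ : κ => τ.1 = j)).card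
          = (Finset.univ : Finset (Fin (b j))).card := by
        refine Finset.card_bij' (fun τ hτ => Fin.cast ?_ τ.2) (fun m _ => (⟨j, m⟩ : κ)) ?_ ?_ ?_ ?_
        · exact congrArg b (by rw [Finset.mem_filter] at hτ; exact hτ.2)
        · intro τ hτ; exact Finset.mem_univ _
        · intro m hm
          rw [Finset.mem_filter]
          exact ⟨Finset.mem_univ _, rfl⟩
        · rintro ⟨j', m⟩ hτ
          rw [Finset.mem_filter] at hτ
          obtain ⟨-, (h : j' = j)⟩ := hτ
          subst h
          rfl
        · intro m hm
          rfl
      rw [this, Finset.card_univ, Fintype.card_fin]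
    omega

lemma hall_real {I J : Type*} [Fintype I] [Fintype J] [DecidableEq I] [DecidableEq J]
    (a : I → ℝ) (b : J → ℝ) (ha : ∀ i, 0 ≤ a i) (hb : ∀ j, 0 ≤ b j)
    (R : I → J → Prop) [∀ i j, Decidable (R i j)]
    (hH : ∀ S : Finset I, ∑ i ∈ S, a i ≤ ∑ j ∈ Finset.univ.filter (fun j => ∃ i ∈ S, R i j), b j) :
    ∃ w : I → J → ℝ, (∀ i j, 0 ≤ w i j) ∧ (∀ i j, w i j ≠ 0 → R i j) ∧
      (∀ i, ∑ j, w i j = a i) ∧ (∀ j, ∑ i, w i j ≤ b j) := by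
  classical
  -- integer approximations
  have key : ∀ m : ℕ, ∃ W : I → J → ℕ, (∀ i j, W i j ≠ 0 → R i j) ∧
      (∀ i, ∑ j, W i j = ⌊a i * ((m : ℝ) + 1)⌋₊) ∧ (∀ j, ∑ i, W i j ≤ ⌈b j * ((m : ℝ) + 1)⌉₊) := by
    intro m
    apply hall_nat
    intro S
    have : ((∑ i ∈ S, ⌊a i * ((m : ℝ)+1)⌋₊ : ℕ) : ℝ)
        ≤ ((∑ j ∈ Finset.univ.filter (fun j => ∃ i ∈ S, R i j), ⌈b j * ((m : ℝ)+1)⌉₊ : ℕ) : ℝ) := by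
      push_cast
      calc ∑ i ∈ S, (⌊a i * ((m : ℝ)+1)⌋₊ : ℝ)
          ≤ ∑ i ∈ S, a i * ((m : ℝ)+1) := by
            refine Finset.sum_le_sum (fun i _ => Nat.floor_le ?_)
            exact mul_nonneg (ha i) (by positivity)
        _ = (∑ i ∈ S, a i) * ((m : ℝ)+1) := by rw [Finset.sum_mul]
        _ ≤ (∑ j ∈ Finset.univ.filter (fun j => ∃ i ∈ S, R i j), b j) * ((m : ℝ)+1) := by
            apply mul_le_mul_of_nonneg_right (hH S)
            positivity
        _ = ∑ j ∈ Finset.univ.filter (fun j => ∃ i ∈ S, R i j), b j * ((m : ℝ)+1) := by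
            rw [Finset.sum_mul]
        _ ≤ _ := Finset.sum_le_sum (fun j _ => Nat.le_ceil _)
    exact_mod_cast this
  choose W hWR hWrow hWcol using key
  set v : ℕ → (I × J → ℝ) := fun m p => (W m p.1 p.2 : ℝ) / ((m : ℝ) + 1) with hv
  have hvnn : ∀ m p, 0 ≤ v m p := by
    intro m p
    positivity
  have hvub : ∀ m p, v m p ≤ a p.1 := by
    intro m ⟨i, j⟩
    rw [hv]
    simp only
    rw [div_le_iff₀ (by positivity)]
    calc (W m i j : ℝ) ≤ ((∑ j', W m i j' : ℕ) : ℝ) := by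
          exact_mod_cast Finset.single_le_sum (f := fun j' => W m i j') (fun _ _ => Nat.zero_le _)
            (Finset.mem_univ j)
      _ = (⌊a i * ((m : ℝ)+1)⌋₊ : ℝ) := by rw [hWrow m i]
      _ ≤ a i * ((m : ℝ)+1) := Nat.floor_le (mul_nonneg (ha i) (by positivity))
  have hmem : ∀ m, v m ∈ Set.Icc (0 : I × J → ℝ) (fun p => a p.1) := by
    intro m
    exact ⟨fun p => hvnn m p, fun p => hvub m p⟩
  obtain ⟨vl, hvmem, φ, hφ, hconv⟩ :=
    (isCompact_Icc (a := (0 : I × J → ℝ)) (b := fun p => a p.1)).tendsto_subseq hmem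
  have hptwise : ∀ p, Tendsto (fun m => v (φ m) p) atTop (nhds (vl p)) := by
    intro p
    exact (tendsto_pi_nhds.1 hconv) p
  have hεlim : Tendsto (fun m : ℕ => 1 / ((φ m : ℝ) + 1)) atTop (nhds 0) :=
    tendsto_one_div_add_atTop_nhds_zero_nat.comp hφ.tendsto_atTop
  refine ⟨fun i j => vl (i, j), fun i j => hvmem.1 (i, j), ?_, ?_, ?_⟩
  · intro i j hne
    by_contra hR
    apply hne
    have hz : ∀ m, v m (i, j) = 0 := by
      intro m
      have : W m i j = 0 := by
        by_contra h
        exact hR (hWR m i j h)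
      simp [hv, this]
    exact tendsto_nhds_unique (hptwise (i, j)) (by simpa [hz] using tendsto_const_nhds)
  · intro i
    have hsum : Tendsto (fun m => ∑ j, v (φ m) (i, j)) atTop (nhds (∑ j, vl (i, j))) :=
      tendsto_finset_sum _ (fun j _ => hptwise (i, j))
    have hrow : ∀ m : ℕ, ∑ j, v m (i, j) = (⌊a i * ((m : ℝ) + 1)⌋₊ : ℝ) / ((m : ℝ) + 1) := by
      intro m
      rw [hv]
      simp only
      rw [← Finset.sum_div]
      congr 1
      rw [← hWrow m i]
      push_cast
      rfl
    have hto : Tendsto (fun m => ∑ j, v (φ m) (i, j)) atTop (nhds (a i)) := by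
      have lb : ∀ m : ℕ, a i - 1 / ((φ m : ℝ) + 1) ≤ ∑ j, v (φ m) (i, j) := by
        intro m
        rw [hrow, sub_le_iff_le_add, ← add_div, le_div_iff₀ (by positivity)]
        have := Nat.lt_floor_add_one (a i * ((φ m : ℝ) + 1))
        nlinarith [this]
      have ub : ∀ m : ℕ, ∑ j, v (φ m) (i, j) ≤ a i := by
        intro m
        rw [hrow, div_le_iff₀ (by positivity)]
        exact Nat.floor_le (mul_nonneg (ha i) (by positivity))
      refine tendsto_of_tendsto_of_tendsto_of_le_of_le ?_ tendsto_const_nhds lb ub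
      have : Tendsto (fun m : ℕ => a i - 1 / ((φ m : ℝ) + 1)) atTop (nhds (a i - 0)) :=
        tendsto_const_nhds.sub hεlim
      simpa using this
    exact tendsto_nhds_unique hsum hto
  · intro j
    have hsum : Tendsto (fun m => ∑ i, v (φ m) (i, j)) atTop (nhds (∑ i, vl (i, j))) :=
      tendsto_finset_sum _ (fun i _ => hptwise (i, j))
    have ub : ∀ m : ℕ, ∑ i, v (φ m) (i, j) ≤ b j + 1 / ((φ m : ℝ) + 1) := by
      intro m
      have hcol : ∑ i, v (φ m) (i, j) = ((∑ i, W (φ m) i j : ℕ) : ℝ) / ((φ m : ℝ) + 1) := by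
        rw [hv]
        simp only
        rw [← Finset.sum_div]
        push_cast
        rfl
      rw [hcol, div_le_iff₀ (by positivity)]
      calc ((∑ i, W (φ m) i j : ℕ) : ℝ) ≤ (⌈b j * ((φ m : ℝ) + 1)⌉₊ : ℝ) := by
            exact_mod_cast hWcol (φ m) j
        _ ≤ b j * ((φ m : ℝ) + 1) + 1 := by
            have := Nat.ceil_lt_add_one (a := b j * ((φ m : ℝ) + 1))
              (mul_nonneg (hb j) (by positivity))
            linarith
        _ = (b j + 1 / ((φ m : ℝ) + 1)) * ((φ m : ℝ) + 1) := by
            field_simp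
    have hub : Tendsto (fun m : ℕ => b j + 1 / ((φ m : ℝ) + 1)) atTop (nhds (b j)) := by
      have := (tendsto_const_nhds (x := b j) (f := atTop (α := ℕ))).add hεlim
      simpa using this
    exact le_of_tendsto_of_tendsto' hsum hub ub

lemma exists_partition {X : Type*} [MetricSpace X] [MeasurableSpace X] [BorelSpace X]
    {K : Set X} (hK : IsCompact K) {ε : ℝ} (hε : 0 < ε) :
    ∃ (N : ℕ) (c : Fin N → X) (A : Fin N → Set X),
      (∀ k, MeasurableSet (A k)) ∧ (∀ k, A k ⊆ Metric.ball (c k) ε) ∧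
      (Pairwise (Function.onFun Disjoint A)) ∧ K ⊆ ⋃ k, A k ∧ (∀ k, A k ⊆ K) := by
  classical
  obtain ⟨t, ht⟩ := hK.elim_finite_subcover (fun x : X => Metric.ball x ε)
    (fun x => isOpen_ball) (fun x hx => Set.mem_iUnion.2 ⟨x, mem_ball_self hε⟩)
  set N := t.card with hN
  set e := t.equivFin with he
  set c : Fin N → X := fun k => (e.symm k : X) with hc
  set A : Fin N → Set X := fun k =>
    (K ∩ Metric.ball (c k) ε) \ ⋃ (l : Fin N) (_ : l < k), Metric.ball (c l) ε with hA
  have hmeas : ∀ k, MeasurableSet (A k) := by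
    intro k
    apply MeasurableSet.diff
    · exact (hK.isClosed.measurableSet).inter measurableSet_ball
    · exact MeasurableSet.iUnion fun l => MeasurableSet.iUnion fun _ => measurableSet_ball
  refine ⟨N, c, A, hmeas, ?_, ?_, ?_, ?_⟩
  · intro k
    exact fun x hx => hx.1.2
  · intro k k' hkk'
    rcases hkk'.lt_or_gt with h | h
    · refine Set.disjoint_left.2 fun x hx hx' => ?_
      exact hx'.2 (Set.mem_iUnion.2 ⟨k, Set.mem_iUnion.2 ⟨h, hx.1.2⟩⟩)
    · refine Set.disjoint_left.2 fun x hx hx' => ?_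
      exact hx.2 (Set.mem_iUnion.2 ⟨k', Set.mem_iUnion.2 ⟨h, hx'.1.2⟩⟩)
  · intro x hx
    have hcov : ∃ k : Fin N, x ∈ Metric.ball (c k) ε := by
      obtain ⟨y, hyt, hxy⟩ := Set.mem_iUnion₂.1 (ht hx)
      exact ⟨e ⟨y, hyt⟩, by simpa [hc, he] using hxy⟩
    set s := Finset.univ.filter (fun k : Fin N => x ∈ Metric.ball (c k) ε) with hs
    have hsne : s.Nonempty := by
      obtain ⟨k, hk⟩ := hcov
      exact ⟨k, Finset.mem_filter.2 ⟨Finset.mem_univ _, hk⟩⟩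
    set k₀ := s.min' hsne with hk₀
    have hk₀s : k₀ ∈ s := s.min'_mem hsne
    rw [hs, Finset.mem_filter] at hk₀s
    refine Set.mem_iUnion.2 ⟨k₀, ⟨⟨hx, hk₀s.2⟩, ?_⟩⟩
    intro hmem
    obtain ⟨l, hl⟩ := Set.mem_iUnion.1 hmem
    obtain ⟨hlk, hball⟩ := Set.mem_iUnion.1 hl
    have : l ∈ s := Finset.mem_filter.2 ⟨Finset.mem_univ _, hball⟩
    exact absurd (s.min'_le l this) (not_le.2 hlk)
  · intro k
    exact fun x hx => hx.1.1

lemma tight {X : Type*} [NormedAddCommGroup X] [MeasurableSpace X] [OpensMeasurableSpace X]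
    (μ : Measure X) [IsProbabilityMeasure μ] {r : ℝ≥0∞} (hr : 0 < r) :
    ∃ M : ℝ, 0 < M ∧ μ ((Metric.closedBall (0 : X) M)ᶜ) < r := by
  have hint : (⋂ m : ℕ, (Metric.closedBall (0 : X) m)ᶜ) = ∅ := by
    ext x
    simp only [Set.mem_iInter, Set.mem_compl_iff, Metric.mem_closedBall, Set.mem_empty_iff_false,
      iff_false, not_forall, not_not]
    obtain ⟨m, hm⟩ := exists_nat_ge (dist x 0)
    exact ⟨m, hm⟩
  have hmono : Antitone (fun m : ℕ => (Metric.closedBall (0 : X) m)ᶜ) := by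
    intro m m' h
    exact Set.compl_subset_compl.2 (Metric.closedBall_subset_closedBall (by exact_mod_cast h))
  have htend : Tendsto (fun m : ℕ => μ ((Metric.closedBall (0 : X) m)ᶜ)) atTop
      (nhds (μ (⋂ m : ℕ, (Metric.closedBall (0 : X) m)ᶜ))) := by
    apply tendsto_measure_iInter_atTop
    · exact fun m => (measurableSet_closedBall).compl.nullMeasurableSet
    · exact hmono
    · exact ⟨0, measure_ne_top μ _⟩
  rw [hint] at htend
  simp only [measure_empty] at htend
  have := htend.eventually_lt_const hr
  obtain ⟨m, hm⟩ := this.exists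
  exact ⟨m + 1, by positivity, lt_of_le_of_lt (measure_mono (Set.compl_subset_compl.2
    (Metric.closedBall_subset_closedBall (by linarith)))) hm⟩

/-- two probability measures, one dominated on closed sets, are equal -/
lemma eq_of_le_on_closed {X : Type*} [MetricSpace X] [MeasurableSpace X] [BorelSpace X]
    (ρ σ : Measure X) [IsProbabilityMeasure ρ] [IsProbabilityMeasure σ]
    (h : ∀ T : Set X, IsClosed T → ρ T ≤ σ T) : ρ = σ := by
  have hopen : ∀ U : Set X, IsOpen U → σ U ≤ ρ U := by
    intro U hU
    have h1 : ρ Uᶜ ≤ σ Uᶜ := h Uᶜ hU.isClosed_compl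
    have h2 : σ U = 1 - σ Uᶜ := by
      rw [← prob_compl_eq_one_sub hU.measurableSet.compl, compl_compl]
    have h3 : ρ U = 1 - ρ Uᶜ := by
      rw [← prob_compl_eq_one_sub hU.measurableSet.compl, compl_compl]
    rw [h2, h3]
    exact tsub_le_tsub_left h1 1
  have hle : ∀ s : Set X, MeasurableSet s → σ s ≤ ρ s := by
    intro s hs
    have := Set.measure_eq_iInf_isOpen s ρ
    rw [this]
    refine le_iInf₂ fun U hsU => le_iInf fun hU => ?_
    exact (measure_mono hsU).trans (hopen U hU)
  refine Measure.ext fun s hs => le_antisymm ?_ (hle s hs)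
  have h1 : σ sᶜ ≤ ρ sᶜ := hle sᶜ hs.compl
  have h2 : σ s = 1 - σ sᶜ := by
    rw [← prob_compl_eq_one_sub hs.compl, compl_compl]
  have h3 : ρ s = 1 - ρ sᶜ := by
    rw [← prob_compl_eq_one_sub hs.compl, compl_compl]
  rw [h2, h3]
  exact tsub_le_tsub_left h1 1

lemma approx (n : ℕ) (μ ν : Measure (E n)) [IsProbabilityMeasure μ] [IsProbabilityMeasure ν]
    (Γ : Set (E n × E n))
    (h1 : ∀ O : Set (E n), MeasurableSet O → μ O ≤ ν {y : E n | ∃ x ∈ O, (x, y) ∈ Γ})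
    {ε : ℝ} (hε : 0 < ε) :
    ∃ π : Measure (E n × E n),
      π (Metric.thickening ε Γ)ᶜ = 0 ∧
      (∀ V : Set (E n), π (Prod.fst ⁻¹' V) ≤ μ (Metric.thickening ε V)) ∧
      (∀ V : Set (E n), π (Prod.snd ⁻¹' V) ≤ ν (Metric.thickening ε V)) ∧
      π Set.univ ≤ 1 ∧ 1 - ENNReal.ofReal ε ≤ π Set.univ := by
  classical
  obtain ⟨M₁, hM₁pos, hM₁⟩ := tight μ (r := ENNReal.ofReal (ε/4)) (ENNReal.ofReal_pos.2 (by linarith))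
  obtain ⟨M₂, hM₂pos, hM₂⟩ := tight ν (r := ENNReal.ofReal (ε/4)) (ENNReal.ofReal_pos.2 (by linarith))
  set K : Set (E n) := Metric.closedBall 0 M₁ with hKdef
  set L : Set (E n) := Metric.closedBall 0 M₂ with hLdef
  have hKcpt : IsCompact K := isCompact_closedBall _ _
  have hLcpt : IsCompact L := isCompact_closedBall _ _
  obtain ⟨N, c, A, hAmeas, hAball, hAdisj, hAcov, hAsub⟩ := exists_partition hKcpt hε
  obtain ⟨N', c', B, hBmeas, hBball, hBdisj, hBcov, hBsub⟩ := exists_partition hLcpt hε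
  have hAK : (⋃ k, A k) = K := Set.Subset.antisymm (Set.iUnion_subset hAsub) hAcov
  have hBL : (⋃ k, B k) = L := Set.Subset.antisymm (Set.iUnion_subset hBsub) hBcov
  -- index types
  set I := Option (Fin N)
  set J := Option (Fin N')
  set a : I → ℝ := fun i => match i with
    | none => (μ Kᶜ).toReal
    | some i => (μ (A i)).toReal
    with hadef
  set b : J → ℝ := fun j => match j with
    | none => (ν Lᶜ).toReal + (μ Kᶜ).toReal
    | some j => (ν (B j)).toReal
    with hbdef
  set R : I → J → Prop := fun i j => match i, j with
    | _, none => True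
    | none, some _ => False
    | some i, some j => ((A i ×ˢ B j) ∩ Γ).Nonempty
    with hRdef
  have ha : ∀ i, 0 ≤ a i := by rintro (_|i) <;> simp [hadef] <;> positivity
  have hb : ∀ j, 0 ≤ b j := by
    rintro (_|j) <;> simp [hbdef]
    positivity
  -- Hall condition
  have hH : ∀ S : Finset I, ∑ i ∈ S, a i
      ≤ ∑ j ∈ Finset.univ.filter (fun j => ∃ i ∈ S, R i j), b j := by
    intro S
    rcases S.eq_empty_or_nonempty with rfl | hSne
    · simp
    set S' : Finset (Fin N) := Finset.univ.filter (fun i => some i ∈ S) with hS'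
    set T' : Finset (Fin N') := Finset.univ.filter
      (fun j => ∃ i ∈ S', ((A i ×ˢ B j) ∩ Γ).Nonempty) with hT'
    set O : Set (E n) := ⋃ i ∈ S', A i with hO
    have hOmeas : MeasurableSet O := by
      exact MeasurableSet.biUnion S'.countable_toSet (fun i _ => hAmeas i)
    have hOsum : ∑ i ∈ S', (μ (A i)).toReal = (μ O).toReal := by
      rw [hO, measure_biUnion_finset ?_ (fun i _ => hAmeas i)]
      · rw [ENNReal.toReal_sum (fun i _ => measure_ne_top μ _)]
      · intro i _ i' _ hii'
        exact hAdisj hii'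
    have him : {y : E n | ∃ x ∈ O, (x, y) ∈ Γ} ⊆ (⋃ j ∈ T', B j) ∪ Lᶜ := by
      rintro y ⟨x, hxO, hxyΓ⟩
      by_cases hyL : y ∈ L
      · left
        rw [← hBL] at hyL
        obtain ⟨j, hyj⟩ := Set.mem_iUnion.1 hyL
        rw [hO] at hxO
        obtain ⟨i, hi⟩ := Set.mem_iUnion.1 hxO
        obtain ⟨hiS', hxA⟩ := Set.mem_iUnion.1 hi
        refine Set.mem_biUnion ?_ hyj
        exact Finset.mem_filter.2 ⟨Finset.mem_univ _, i, hiS', ⟨(x, y), ⟨hxA, hyj⟩, hxyΓ⟩⟩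
      · right; exact hyL
    have hmeasineq : (μ O).toReal ≤ ∑ j ∈ T', (ν (B j)).toReal + (ν Lᶜ).toReal := by
      have h1O := h1 O hOmeas
      have h2O : ν {y : E n | ∃ x ∈ O, (x, y) ∈ Γ} ≤ ∑ j ∈ T', ν (B j) + ν Lᶜ := by
        refine le_trans (measure_mono him) ?_
        refine le_trans (measure_union_le _ _) ?_
        exact add_le_add (measure_biUnion_finset_le _ _) le_rfl
      have hfin : (∑ j ∈ T', ν (B j) + ν Lᶜ) ≠ ∞ := by
        refine ENNReal.add_ne_top.2 ⟨?_, measure_ne_top _ _⟩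
        exact (ENNReal.sum_lt_top.mpr (fun j _ => measure_lt_top _ _)).ne
      calc (μ O).toReal ≤ (∑ j ∈ T', ν (B j) + ν Lᶜ).toReal :=
            (ENNReal.toReal_le_toReal (measure_ne_top _ _) hfin).2 (h1O.trans h2O)
        _ = ∑ j ∈ T', (ν (B j)).toReal + (ν Lᶜ).toReal := by
            rw [ENNReal.toReal_add (by
              exact (ENNReal.sum_lt_top.mpr (fun j _ => measure_lt_top _ _)).ne) (measure_ne_top _ _),
              ENNReal.toReal_sum (fun j _ => measure_ne_top _ _)]
    -- bound LHS
    have hsubS : S ⊆ insert none (S'.image some) := by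
      intro i hiS
      match i with
      | none => exact Finset.mem_insert_self _ _
      | some i' =>
        refine Finset.mem_insert_of_mem (Finset.mem_image.2 ⟨i', ?_, rfl⟩)
        rw [hS', Finset.mem_filter]
        exact ⟨Finset.mem_univ _, hiS⟩
    have hLHS : ∑ i ∈ S, a i ≤ a none + ∑ i ∈ S', a (some i) := by
      calc ∑ i ∈ S, a i ≤ ∑ i ∈ insert none (S'.image some), a i :=
            Finset.sum_le_sum_of_subset_of_nonneg hsubS (fun i _ _ => ha i)
        _ = a none + ∑ i ∈ S'.image some, a i := by
            rw [Finset.sum_insert (by simp)]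
        _ = a none + ∑ i ∈ S', a (some i) := by
            rw [Finset.sum_image (by intro x _ y _ h; simpa using h)]
    -- bound RHS
    have hsubT : insert none (T'.image some) ⊆
        Finset.univ.filter (fun j => ∃ i ∈ S, R i j) := by
      intro j hj
      rw [Finset.mem_filter]
      refine ⟨Finset.mem_univ _, ?_⟩
      rcases Finset.mem_insert.1 hj with rfl | hj'
      · obtain ⟨i, hiS⟩ := hSne
        exact ⟨i, hiS, by simp [hRdef]⟩
      · obtain ⟨j', hj'T, rfl⟩ := Finset.mem_image.1 hj'
        rw [hT', Finset.mem_filter] at hj'T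
        obtain ⟨-, i, hiS', hne⟩ := hj'T
        rw [hS', Finset.mem_filter] at hiS'
        exact ⟨some i, hiS'.2, hne⟩
    have hRHS : b none + ∑ j ∈ T', b (some j)
        ≤ ∑ j ∈ Finset.univ.filter (fun j => ∃ i ∈ S, R i j), b j := by
      calc b none + ∑ j ∈ T', b (some j)
          = ∑ j ∈ insert none (T'.image some), b j := by
            rw [Finset.sum_insert (by simp),
              Finset.sum_image (by intro x _ y _ h; simpa using h)]
        _ ≤ _ := Finset.sum_le_sum_of_subset_of_nonneg hsubT (fun j _ _ => hb j)
    refine hLHS.trans (le_trans ?_ hRHS)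
    have : ∑ i ∈ S', a (some i) = (μ O).toReal := by
      simpa [hadef] using hOsum
    rw [this]
    simp only [hadef, hbdef]
    have : ∑ j ∈ T', (fun j => (ν (B j)).toReal) j = ∑ j ∈ T', (ν (B j)).toReal := rfl
    linarith [hmeasineq]
  obtain ⟨w, hwnn, hwR, hwrow, hwcol⟩ := hall_real a b ha hb R hH
  set π : Measure (E n × E n) := ∑ i : Fin N, ∑ j : Fin N',
    ENNReal.ofReal (w (some i) (some j)) • Measure.dirac (c i, c' j) with hπdef
  have hπapp : ∀ s : Set (E n × E n), π s = ∑ i : Fin N, ∑ j : Fin N',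
      ENNReal.ofReal (w (some i) (some j)) *
        s.indicator (fun _ => (1 : ℝ≥0∞)) (c i, c' j) := by
    intro s
    rw [hπdef, Measure.finset_sum_apply]
    refine Finset.sum_congr rfl fun i _ => ?_
    rw [Measure.finset_sum_apply]
    refine Finset.sum_congr rfl fun j _ => ?_
    rw [Measure.smul_apply, Measure.dirac_apply, smul_eq_mul]
    rfl
  -- generic row bound
  have hrowle : ∀ i : Fin N, ∑ j : Fin N', w (some i) (some j) ≤ a (some i) := by
    intro i
    have := hwrow (some i)
    rw [Fintype.sum_option] at this
    have hnn := hwnn (some i) none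
    linarith
  have hinner : ∀ i : Fin N, ∑ j : Fin N', ENNReal.ofReal (w (some i) (some j)) ≤ μ (A i) := by
    intro i
    rw [← ENNReal.ofReal_sum_of_nonneg (fun j _ => hwnn _ _)]
    calc ENNReal.ofReal (∑ j : Fin N', w (some i) (some j))
        ≤ ENNReal.ofReal (a (some i)) := ENNReal.ofReal_le_ofReal (hrowle i)
      _ = μ (A i) := by
          simp only [hadef]
          exact ENNReal.ofReal_toReal (measure_ne_top _ _)
  have hcolle : ∀ j : Fin N', ∑ i : Fin N, w (some i) (some j) ≤ b (some j) := by
    intro j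
    have := hwcol (some j)
    rw [Fintype.sum_option] at this
    have hnn := hwnn none (some j)
    linarith
  have hinner' : ∀ j : Fin N', ∑ i : Fin N, ENNReal.ofReal (w (some i) (some j)) ≤ ν (B j) := by
    intro j
    rw [← ENNReal.ofReal_sum_of_nonneg (fun i _ => hwnn _ _)]
    calc ENNReal.ofReal (∑ i : Fin N, w (some i) (some j))
        ≤ ENNReal.ofReal (b (some j)) := ENNReal.ofReal_le_ofReal (hcolle j)
      _ = ν (B j) := by
          simp only [hbdef]
          exact ENNReal.ofReal_toReal (measure_ne_top _ _)
  refine ⟨π, ?_, ?_, ?_, ?_, ?_⟩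
  -- (1) concentrated near Γ
  · rw [hπapp]
    refine Finset.sum_eq_zero fun i _ => Finset.sum_eq_zero fun j _ => ?_
    by_cases hw : w (some i) (some j) = 0
    · simp [hw]
    · obtain ⟨⟨x, y⟩, ⟨hxA, hyB⟩, hxyΓ⟩ :=
        (show ((A i ×ˢ B j) ∩ Γ).Nonempty from hwR _ _ hw)
      have hmem : (c i, c' j) ∈ Metric.thickening ε Γ := by
        rw [Metric.mem_thickening_iff]
        refine ⟨(x, y), hxyΓ, ?_⟩
        rw [Prod.dist_eq]
        apply max_lt
        · rw [dist_comm]; exact Metric.mem_ball.1 (hAball i hxA)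
        · rw [dist_comm]; exact Metric.mem_ball.1 (hBball j hyB)
      rw [Set.indicator_of_notMem (by simpa using hmem), mul_zero]
  -- (2) first marginal bound
  · intro V
    rw [hπapp]
    calc ∑ i : Fin N, ∑ j : Fin N', ENNReal.ofReal (w (some i) (some j)) *
          (Prod.fst ⁻¹' V).indicator (fun _ => (1 : ℝ≥0∞)) (c i, c' j)
        ≤ ∑ i : Fin N, V.indicator (fun _ => μ (A i)) (c i) := by
          refine Finset.sum_le_sum fun i _ => ?_
          by_cases hci : c i ∈ V
          · rw [Set.indicator_of_mem hci]
            refine le_trans (Finset.sum_le_sum fun j _ => ?_) (hinner i)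
            by_cases hmem : (c i, c' j) ∈ Prod.fst ⁻¹' V
            · rw [Set.indicator_of_mem hmem, mul_one]
            · rw [Set.indicator_of_notMem hmem, mul_zero]; exact zero_le
          · have : ∀ j : Fin N', (c i, c' j) ∉ Prod.fst ⁻¹' V := fun j => hci
            rw [Set.indicator_of_notMem hci]
            refine le_of_eq (Finset.sum_eq_zero fun j _ => ?_)
            rw [Set.indicator_of_notMem (this j), mul_zero]
      _ = ∑ i ∈ Finset.univ.filter (fun i : Fin N => c i ∈ V), μ (A i) := by
          rw [Finset.sum_filter]
          refine Finset.sum_congr rfl fun i _ => ?_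
          rw [Set.indicator_apply]
      _ = μ (⋃ i ∈ Finset.univ.filter (fun i : Fin N => c i ∈ V), A i) := by
          rw [measure_biUnion_finset (fun i _ i' _ hii' => hAdisj hii') (fun i _ => hAmeas i)]
      _ ≤ μ (Metric.thickening ε V) := by
          refine measure_mono ?_
          refine Set.iUnion₂_subset fun i hi => ?_
          rw [Finset.mem_filter] at hi
          intro z hz
          rw [Metric.mem_thickening_iff]
          exact ⟨c i, hi.2, Metric.mem_ball.1 (hAball i hz)⟩
  -- (3) second marginal bound
  · intro V
    rw [hπapp, Finset.sum_comm]
    calc ∑ j : Fin N', ∑ i : Fin N, ENNReal.ofReal (w (some i) (some j)) *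
          (Prod.snd ⁻¹' V).indicator (fun _ => (1 : ℝ≥0∞)) (c i, c' j)
        ≤ ∑ j : Fin N', V.indicator (fun _ => ν (B j)) (c' j) := by
          refine Finset.sum_le_sum fun j _ => ?_
          by_cases hcj : c' j ∈ V
          · rw [Set.indicator_of_mem hcj]
            refine le_trans (Finset.sum_le_sum fun i _ => ?_) (hinner' j)
            by_cases hmem : (c i, c' j) ∈ Prod.snd ⁻¹' V
            · rw [Set.indicator_of_mem hmem, mul_one]
            · rw [Set.indicator_of_notMem hmem, mul_zero]; exact zero_le
          · have : ∀ i : Fin N, (c i, c' j) ∉ Prod.snd ⁻¹' V := fun i => hcj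
            rw [Set.indicator_of_notMem hcj]
            refine le_of_eq (Finset.sum_eq_zero fun i _ => ?_)
            rw [Set.indicator_of_notMem (this i), mul_zero]
      _ = ∑ j ∈ Finset.univ.filter (fun j : Fin N' => c' j ∈ V), ν (B j) := by
          rw [Finset.sum_filter]
          refine Finset.sum_congr rfl fun j _ => ?_
          rw [Set.indicator_apply]
      _ = ν (⋃ j ∈ Finset.univ.filter (fun j : Fin N' => c' j ∈ V), B j) := by
          rw [measure_biUnion_finset (fun j _ j' _ hjj' => hBdisj hjj') (fun j _ => hBmeas j)]
      _ ≤ ν (Metric.thickening ε V) := by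
          refine measure_mono ?_
          refine Set.iUnion₂_subset fun j hj => ?_
          rw [Finset.mem_filter] at hj
          intro z hz
          rw [Metric.mem_thickening_iff]
          exact ⟨c' j, hj.2, Metric.mem_ball.1 (hBball j hz)⟩
  -- (4) total mass at most one
  · rw [hπapp]
    calc ∑ i : Fin N, ∑ j : Fin N', ENNReal.ofReal (w (some i) (some j)) *
          Set.indicator Set.univ (fun _ => (1 : ℝ≥0∞)) (c i, c' j)
        ≤ ∑ i : Fin N, μ (A i) := by
          refine Finset.sum_le_sum fun i _ => ?_
          refine le_trans (le_of_eq (Finset.sum_congr rfl fun j _ => ?_)) (hinner i)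
          rw [Set.indicator_of_mem (Set.mem_univ _), mul_one]
      _ = μ (⋃ i ∈ (Finset.univ : Finset (Fin N)), A i) := by
          rw [measure_biUnion_finset (fun i _ i' _ hii' => hAdisj hii') (fun i _ => hAmeas i)]
      _ ≤ 1 := by
          refine le_trans (measure_mono (Set.subset_univ _)) ?_
          simp
  -- (5) total mass at least 1 - ε
  · have hdouble : π Set.univ = ENNReal.ofReal (∑ i : Fin N, ∑ j : Fin N', w (some i) (some j)) := by
      rw [hπapp, ENNReal.ofReal_sum_of_nonneg
        (fun i _ => Finset.sum_nonneg fun j _ => hwnn _ _)]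
      refine Finset.sum_congr rfl fun i _ => ?_
      rw [ENNReal.ofReal_sum_of_nonneg (fun j _ => hwnn _ _)]
      refine Finset.sum_congr rfl fun j _ => ?_
      rw [Set.indicator_of_mem (Set.mem_univ _), mul_one]
    have hKtot : ∑ i : Fin N, a (some i) = (μ K).toReal := by
      have : ∑ i : Fin N, (μ (A i)).toReal = (μ (⋃ i ∈ (Finset.univ : Finset (Fin N)), A i)).toReal := by
        rw [measure_biUnion_finset (fun i _ i' _ hii' => hAdisj hii') (fun i _ => hAmeas i),
          ENNReal.toReal_sum (fun i _ => measure_ne_top _ _)]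
      simp only [hadef]
      rw [this]
      congr 1
      rw [← hAK]
      congr 1
      simp
    have hKc : (μ Kᶜ).toReal < ε / 4 := by
      have := ENNReal.toReal_lt_toReal (measure_ne_top _ _) ENNReal.ofReal_ne_top |>.2 hM₁
      rwa [ENNReal.toReal_ofReal (by linarith)] at this
    have hLc : (ν Lᶜ).toReal < ε / 4 := by
      have := ENNReal.toReal_lt_toReal (measure_ne_top _ _) ENNReal.ofReal_ne_top |>.2 hM₂
      rwa [ENNReal.toReal_ofReal (by linarith)] at this
    have hKK : (μ K).toReal + (μ Kᶜ).toReal = 1 := by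
      rw [← ENNReal.toReal_add (measure_ne_top _ _) (measure_ne_top _ _),
        measure_add_measure_compl (hKcpt.isClosed.measurableSet)]
      simp
    have hcolnone : ∑ i : Fin N, w (some i) none ≤ b none := by
      have := hwcol none
      rw [Fintype.sum_option] at this
      have hnn := hwnn none none
      linarith
    have hrownone : ∀ i : Fin N, ∑ j : Fin N', w (some i) (some j)
        = a (some i) - w (some i) none := by
      intro i
      have := hwrow (some i)
      rw [Fintype.sum_option] at this
      linarith
    have hdsum : 1 - ε ≤ ∑ i : Fin N, ∑ j : Fin N', w (some i) (some j) := by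
      have : ∑ i : Fin N, ∑ j : Fin N', w (some i) (some j)
          = ∑ i : Fin N, a (some i) - ∑ i : Fin N, w (some i) none := by
        rw [← Finset.sum_sub_distrib]
        exact Finset.sum_congr rfl fun i _ => hrownone i
      rw [this, hKtot]
      have hbnone : b none = (ν Lᶜ).toReal + (μ Kᶜ).toReal := rfl
      have := hcolnone
      rw [hbnone] at this
      linarith
    rw [hdouble]
    calc (1 : ℝ≥0∞) - ENNReal.ofReal ε = ENNReal.ofReal 1 - ENNReal.ofReal ε := by
          rw [ENNReal.ofReal_one]
      _ = ENNReal.ofReal (1 - ε) := (ENNReal.ofReal_sub _ (le_of_lt hε)).symm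
      _ ≤ _ := ENNReal.ofReal_le_ofReal hdsum

/-- if Γ is closed and μ, ν are probability measures such that for every
Borel O one has μ(O) ≤ ν(Γ-image of O) and ν(O) ≤ μ(Γ-preimage of O), then there is a
coupling of μ and ν concentrated on Γ. -/
theorem stmt2 (n : ℕ) (μ ν : Measure (E n))
    (hμp : IsProbabilityMeasure μ) (hνp : IsProbabilityMeasure ν)
    (Γ : Set (E n × E n)) (hΓ : IsClosed Γ)
    (h1 : ∀ O : Set (E n), MeasurableSet O → μ O ≤ ν {y : E n | ∃ x ∈ O, (x, y) ∈ Γ})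
    (h2 : ∀ O : Set (E n), MeasurableSet O → ν O ≤ μ {x : E n | ∃ y ∈ O, (x, y) ∈ Γ}) :
    ∃ π : Measure (E n × E n), IsProbabilityMeasure π ∧
      π.map Prod.fst = μ ∧ π.map Prod.snd = ν ∧ π Γᶜ = 0 := by
  classical
  -- Γ is nonempty
  have hΓne : Γ.Nonempty := by
    by_contra h
    rw [Set.not_nonempty_iff_eq_empty] at h
    have h0 := h1 Set.univ MeasurableSet.univ
    rw [measure_univ] at h0
    have : {y : E n | ∃ x ∈ Set.univ, (x, y) ∈ Γ} = ∅ := by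
      ext y; simp [h]
    rw [this, measure_empty] at h0
    exact absurd h0 (by simp)
  -- approximating couplings
  have hεpos : ∀ k : ℕ, (0 : ℝ) < 1 / (k + 1) := fun k => by positivity
  choose πs hπ1 hπ2 hπ3 hπ4 hπ5 using fun k : ℕ => approx n μ ν Γ h1 (hεpos k)
  have hfin : ∀ k (s : Set (E n × E n)), πs k s ≠ ∞ := fun k s =>
    ((measure_mono (Set.subset_univ s)).trans (hπ4 k)).trans_lt ENNReal.one_lt_top |>.ne
  -- ultrafilter limit
  set U : Ultrafilter ℕ := Ultrafilter.of atTop with hUdef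
  have hU : (U : Filter ℕ) ≤ atTop := Ultrafilter.of_le _
  have hlim : ∀ s : Set (E n × E n), ∃ x, x ∈ Set.Icc (0:ℝ) 1 ∧
      Tendsto (fun k => (πs k s).toReal) (U : Filter ℕ) (nhds x) := by
    intro s
    have hmem : (Ultrafilter.map (fun k => (πs k s).toReal) U : Filter ℝ)
        ≤ Filter.principal (Set.Icc (0:ℝ) 1) := by
      rw [Filter.le_principal_iff]
      refine Filter.mem_map.2 (Filter.univ_mem' (fun k => ?_))
      refine ⟨ENNReal.toReal_nonneg, ?_⟩
      exact ENNReal.toReal_le_of_le_ofReal one_pos.le (by simpa using (measure_mono (Set.subset_univ s)).trans (hπ4 k))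
    obtain ⟨x, hx, hle⟩ := isCompact_Icc.ultrafilter_le_nhds
      (Ultrafilter.map (fun k => (πs k s).toReal) U) hmem
    exact ⟨x, hx, hle⟩
  choose ℓ hℓmem hℓ using hlim
  have hℓ0 : ∀ s, 0 ≤ ℓ s := fun s => (hℓmem s).1
  have hℓ1 : ∀ s, ℓ s ≤ 1 := fun s => (hℓmem s).2
  have hev : ∀ (s : Set (E n × E n)) (r : ℝ),
      (∀ᶠ k in atTop, (πs k s).toReal ≤ r) → ℓ s ≤ r := by
    intro s r h
    exact le_of_tendsto (hℓ s) (hU h)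
  have hmono : ∀ s t : Set (E n × E n), s ⊆ t → ℓ s ≤ ℓ t := by
    intro s t hst
    refine le_of_tendsto_of_tendsto' (hℓ s) (hℓ t) fun k => ?_
    exact ENNReal.toReal_mono (hfin k t) (measure_mono hst)
  -- the content
  set C : Content (E n × E n) :=
    { toFun := fun K => Real.toNNReal (ℓ K)
      mono' := fun K₁ K₂ h => Real.toNNReal_mono (hmono _ _ h)
      sup_disjoint' := by
        intro K₁ K₂ hd h₁ h₂
        have hadd : ℓ (↑K₁ ∪ ↑K₂) = ℓ ↑K₁ + ℓ ↑K₂ := by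
          refine tendsto_nhds_unique ?_ ((hℓ ↑K₁).add (hℓ ↑K₂))
          have : ∀ k : ℕ, (πs k (↑K₁ ∪ ↑K₂)).toReal
              = (πs k ↑K₁).toReal + (πs k ↑K₂).toReal := by
            intro k
            rw [measure_union hd h₂.measurableSet, ENNReal.toReal_add (hfin _ _) (hfin _ _)]
          simpa [this] using hℓ (↑K₁ ∪ ↑K₂)
        have : (↑(K₁ ⊔ K₂) : Set (E n × E n)) = ↑K₁ ∪ ↑K₂ := rfl
        simp only [this, hadd]
        exact Real.toNNReal_add (hℓ0 _) (hℓ0 _)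
      sup_le' := by
        intro K₁ K₂
        have hsub : ℓ (↑K₁ ∪ ↑K₂) ≤ ℓ ↑K₁ + ℓ ↑K₂ := by
          refine le_of_tendsto_of_tendsto' (hℓ (↑K₁ ∪ ↑K₂)) ((hℓ ↑K₁).add (hℓ ↑K₂)) fun k => ?_
          refine le_trans (ENNReal.toReal_mono ?_ (measure_union_le _ _)) ?_
          · exact ENNReal.add_ne_top.2 ⟨hfin _ _, hfin _ _⟩
          · rw [ENNReal.toReal_add (hfin _ _) (hfin _ _)]
        have hcoe : (↑(K₁ ⊔ K₂) : Set (E n × E n)) = ↑K₁ ∪ ↑K₂ := rfl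
        calc Real.toNNReal (ℓ ↑(K₁ ⊔ K₂)) = Real.toNNReal (ℓ (↑K₁ ∪ ↑K₂)) := by rw [hcoe]
          _ ≤ Real.toNNReal (ℓ ↑K₁ + ℓ ↑K₂) := Real.toNNReal_mono hsub
          _ = Real.toNNReal (ℓ ↑K₁) + Real.toNNReal (ℓ ↑K₂) :=
              Real.toNNReal_add (hℓ0 _) (hℓ0 _) } with hCdef
  have hCval : ∀ K : TopologicalSpace.Compacts (E n × E n),
      (C K : ℝ≥0∞) = ENNReal.ofReal (ℓ ↑K) := fun K => rfl
  set P : Measure (E n × E n) := C.measure with hPdef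
  -- evaluation on opens
  have hopen_le : ∀ (Uo : Set (E n × E n)) (hUo : IsOpen Uo) (r : ℝ≥0∞),
      (∀ K : TopologicalSpace.Compacts (E n × E n), (K : Set (E n × E n)) ⊆ Uo →
        (C K : ℝ≥0∞) ≤ r) → P Uo ≤ r := by
    intro Uo hUo r h
    rw [hPdef, C.measure_apply hUo.measurableSet, C.outerMeasure_of_isOpen Uo hUo]
    exact iSup₂_le h
  have hopen_ge : ∀ (Uo : Set (E n × E n)) (hUo : IsOpen Uo)
      (K : TopologicalSpace.Compacts (E n × E n)), (K : Set (E n × E n)) ⊆ Uo →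
      (C K : ℝ≥0∞) ≤ P Uo := by
    intro Uo hUo K hK
    rw [hPdef, C.measure_apply hUo.measurableSet, C.outerMeasure_of_isOpen Uo hUo]
    exact C.le_innerContent K ⟨Uo, hUo⟩ hK
  -- (1) P is concentrated on Γ
  have hΓc : P Γᶜ = 0 := by
    refine le_antisymm ?_ zero_le
    refine hopen_le Γᶜ hΓ.isOpen_compl 0 ?_
    intro K hK
    have hdisj : Disjoint (K : Set (E n × E n)) Γ := Set.disjoint_left.2 fun p hp => hK hp
    obtain ⟨δ, hδpos, hδ⟩ := hdisj.exists_cthickenings K.2 hΓ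
    have hℓK : ℓ ↑K ≤ 0 := by
      apply hev
      obtain ⟨k₀, hk₀⟩ := exists_nat_one_div_lt hδpos
      filter_upwards [eventually_ge_atTop k₀] with k hk
      have hεk : 1 / ((k : ℝ) + 1) ≤ δ := by
        have hmono' : 1 / ((k : ℝ) + 1) ≤ 1 / ((k₀ : ℝ) + 1) := by
          apply one_div_le_one_div_of_le (by positivity)
          have : (k₀ : ℝ) ≤ (k : ℝ) := by exact_mod_cast hk
          linarith
        exact hmono'.trans hk₀.le
      have hsub : (K : Set (E n × E n)) ⊆ (Metric.thickening (1/((k:ℝ)+1)) Γ)ᶜ := by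
        intro p hp hmem
        have hp1 : p ∈ Metric.cthickening δ Γ :=
          Metric.thickening_subset_cthickening_of_le hεk _ hmem
        have hp2 : p ∈ Metric.cthickening δ (K : Set (E n × E n)) :=
          Metric.self_subset_cthickening _ hp
        exact Set.disjoint_left.1 hδ hp2 hp1
      have hle0 := (measure_mono hsub).trans (le_of_eq (hπ1 k))
      have h00 : πs k (K : Set (E n × E n)) = 0 := le_antisymm hle0 zero_le
      simp [h00]
    rw [hCval]
    exact le_of_eq (ENNReal.ofReal_eq_zero.2 hℓK)
  -- (2) total mass
  have hPle : P Set.univ ≤ 1 := by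
    refine hopen_le _ isOpen_univ 1 fun K _ => ?_
    rw [hCval]
    calc ENNReal.ofReal (ℓ ↑K) ≤ ENNReal.ofReal 1 := ENNReal.ofReal_le_ofReal (hℓ1 _)
      _ = 1 := ENNReal.ofReal_one
  have hPuniv : P Set.univ = 1 := by
    refine le_antisymm hPle ?_
    refine ENNReal.le_of_forall_pos_le_add fun η hη hfin' => ?_
    set δ : ℝ := (η : ℝ) / 3 with hδdef
    have hδpos : 0 < δ := by
      have : (0:ℝ) < η := hη
      positivity
    obtain ⟨M₁, hM₁pos, hM₁⟩ := tight μ (r := ENNReal.ofReal δ) (ENNReal.ofReal_pos.2 hδpos)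
    obtain ⟨M₂, hM₂pos, hM₂⟩ := tight ν (r := ENNReal.ofReal δ) (ENNReal.ofReal_pos.2 hδpos)
    set M := max M₁ M₂ with hM
    set Q : Set (E n) := Metric.closedBall 0 (M + 2) with hQ
    have hQcpt : IsCompact Q := isCompact_closedBall _ _
    set KQ : TopologicalSpace.Compacts (E n × E n) := ⟨Q ×ˢ Q, hQcpt.prod hQcpt⟩ with hKQ
    have hbound : ∀ᶠ k in atTop, 1 - 3*δ ≤ (πs k (Q ×ˢ Q)).toReal := by
      obtain ⟨k₀, hk₀⟩ := exists_nat_one_div_lt (lt_min hδpos one_pos)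
      filter_upwards [eventually_ge_atTop k₀] with k hk
      have hεle : 1/((k:ℝ)+1) ≤ min δ 1 := by
        have hmono' : 1 / ((k : ℝ) + 1) ≤ 1 / ((k₀ : ℝ) + 1) := by
          apply one_div_le_one_div_of_le (by positivity)
          have : (k₀ : ℝ) ≤ (k : ℝ) := by exact_mod_cast hk
          linarith
        exact hmono'.trans hk₀.le
      have hεpos' : 0 < 1/((k:ℝ)+1) := hεpos k
      have hQc : ∀ M' : ℝ, M' ≤ M + 1 →
          Metric.thickening (1/((k:ℝ)+1)) Qᶜ ⊆ (Metric.closedBall (0 : E n) M')ᶜ := by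
        intro M' hM' z hz
        rw [Metric.mem_thickening_iff] at hz
        obtain ⟨y, hyQ, hzy⟩ := hz
        rw [hQ] at hyQ
        simp only [Set.mem_compl_iff, Metric.mem_closedBall, not_le] at hyQ ⊢
        have htri : dist y (0 : E n) ≤ dist y z + dist z 0 := dist_triangle _ _ _
        have hz1 : dist z y < 1 := lt_of_lt_of_le hzy (hεle.trans (min_le_right _ _))
        rw [dist_comm y z] at htri
        linarith
      have hsplit : (Q ×ˢ Q)ᶜ ⊆ (Prod.fst ⁻¹' Qᶜ) ∪ (Prod.snd ⁻¹' Qᶜ) := by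
        intro p hp
        by_cases h1' : p.1 ∈ Q
        · by_cases h2' : p.2 ∈ Q
          · exact absurd (Set.mem_prod.2 ⟨h1', h2'⟩) hp
          · exact Or.inr h2'
        · exact Or.inl h1'
      have hcomp : πs k ((Q ×ˢ Q)ᶜ) ≤ ENNReal.ofReal δ + ENNReal.ofReal δ := by
        refine le_trans (measure_mono hsplit) ?_
        refine le_trans (measure_union_le _ _) ?_
        refine add_le_add ?_ ?_
        · refine le_trans (hπ2 k Qᶜ) ?_
          refine le_trans (measure_mono (hQc M₁ (by rw [hM]; have := le_max_left M₁ M₂; linarith))) hM₁.le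
        · refine le_trans (hπ3 k Qᶜ) ?_
          refine le_trans (measure_mono (hQc M₂ (by rw [hM]; have := le_max_right M₁ M₂; linarith))) hM₂.le
      have hunivlb : 1 - 1/((k:ℝ)+1) ≤ (πs k Set.univ).toReal := by
        have := hπ5 k
        have heq : (1 : ℝ≥0∞) - ENNReal.ofReal (1/((k:ℝ)+1)) = ENNReal.ofReal (1 - 1/((k:ℝ)+1)) := by
          rw [ENNReal.ofReal_sub _ hεpos'.le, ENNReal.ofReal_one]
        rw [heq] at this
        exact (ENNReal.ofReal_le_iff_le_toReal (hfin k _)).1 this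
      have hsubadd : (πs k Set.univ).toReal
          ≤ (πs k (Q ×ˢ Q)).toReal + (πs k ((Q ×ˢ Q)ᶜ)).toReal := by
        have hle' : πs k Set.univ ≤ πs k (Q ×ˢ Q) + πs k ((Q ×ˢ Q)ᶜ) := by
          rw [← Set.union_compl_self (Q ×ˢ Q)]
          exact measure_union_le _ _
        refine le_trans (ENNReal.toReal_mono ?_ hle') ?_
        · exact ENNReal.add_ne_top.2 ⟨hfin _ _, hfin _ _⟩
        · rw [ENNReal.toReal_add (hfin _ _) (hfin _ _)]
      have hcompr : (πs k ((Q ×ˢ Q)ᶜ)).toReal ≤ 2*δ := by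
        have := ENNReal.toReal_mono ?_ hcomp
        · rw [← ENNReal.ofReal_add hδpos.le hδpos.le, ENNReal.toReal_ofReal (by linarith)] at this
          linarith
        · rw [← ENNReal.ofReal_add hδpos.le hδpos.le]
          exact ENNReal.ofReal_ne_top
      have hεδ : 1/((k:ℝ)+1) ≤ δ := hεle.trans (min_le_left _ _)
      linarith
    have hℓQ : 1 - 3*δ ≤ ℓ (Q ×ˢ Q) := ge_of_tendsto (hℓ _) (hU hbound)
    have hCQ : ENNReal.ofReal (1 - 3*δ) ≤ P Set.univ := by
      refine le_trans ?_ (hopen_ge _ isOpen_univ KQ (Set.subset_univ _))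
      rw [hCval]
      exact ENNReal.ofReal_le_ofReal hℓQ
    have hη3 : ENNReal.ofReal (3*δ) = (η : ℝ≥0∞) := by
      rw [hδdef]
      rw [show 3*((η:ℝ)/3) = (η:ℝ) by ring]
      exact ENNReal.ofReal_coe_nnreal
    rcases le_or_gt (3*δ) 1 with h3δ | h3δ
    · calc (1:ℝ≥0∞) = ENNReal.ofReal (1 - 3*δ) + ENNReal.ofReal (3*δ) := by
            rw [← ENNReal.ofReal_add (by linarith) (by positivity)]
            norm_num
        _ ≤ P Set.univ + (η : ℝ≥0∞) := add_le_add hCQ (le_of_eq hη3)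
    · have : (1:ℝ≥0∞) ≤ (η : ℝ≥0∞) := by
        rw [← hη3]
        calc (1:ℝ≥0∞) = ENNReal.ofReal 1 := ENNReal.ofReal_one.symm
          _ ≤ ENNReal.ofReal (3*δ) := ENNReal.ofReal_le_ofReal h3δ.le
      exact le_add_left this
  -- (3) marginal bounds on closed sets
  have hmarg : ∀ (σ : Measure (E n)) (pr : E n × E n → E n), Continuous pr →
      (∀ (k : ℕ) (V : Set (E n)), πs k (pr ⁻¹' V) ≤ σ (Metric.thickening (1/((k:ℝ)+1)) V)) →
      IsFiniteMeasure σ →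
      ∀ T : Set (E n), IsClosed T → P (pr ⁻¹' T) ≤ σ T := by
    intro σ pr hpr hπσ hσfin T hT
    have hδb : ∀ δ : ℝ, 0 < δ → P (pr ⁻¹' T) ≤ σ (Metric.thickening (δ + δ) T) := by
      intro δ hδ'
      have hsub : pr ⁻¹' T ⊆ pr ⁻¹' (Metric.thickening δ T) :=
        Set.preimage_mono (Metric.self_subset_thickening hδ' T)
      refine le_trans (measure_mono hsub) ?_
      refine hopen_le _ (Metric.isOpen_thickening.preimage hpr) _ ?_
      intro K hK
      rw [hCval]
      have hb : ℓ ↑K ≤ (σ (Metric.thickening (δ + δ) T)).toReal := by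
        apply hev
        obtain ⟨k₀, hk₀⟩ := exists_nat_one_div_lt hδ'
        filter_upwards [eventually_ge_atTop k₀] with k hk
        have hεδ : 1/((k:ℝ)+1) ≤ δ := by
          have hmono' : 1 / ((k : ℝ) + 1) ≤ 1 / ((k₀ : ℝ) + 1) := by
            apply one_div_le_one_div_of_le (by positivity)
            have : (k₀ : ℝ) ≤ (k : ℝ) := by exact_mod_cast hk
            linarith
          exact hmono'.trans hk₀.le
        have step1 : πs k (K : Set (E n × E n)) ≤ πs k (pr ⁻¹' (Metric.thickening δ T)) :=
          measure_mono hK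
        have step2 := hπσ k (Metric.thickening δ T)
        have step3 : Metric.thickening (1/((k:ℝ)+1)) (Metric.thickening δ T)
            ⊆ Metric.thickening (δ + δ) T :=
          le_trans (Metric.thickening_thickening_subset _ _ _)
            (Metric.thickening_mono (by linarith) T)
        exact ENNReal.toReal_mono (measure_ne_top σ _)
          ((step1.trans step2).trans (measure_mono step3))
      calc ENNReal.ofReal (ℓ ↑K)
          ≤ ENNReal.ofReal ((σ (Metric.thickening (δ + δ) T)).toReal) :=
            ENNReal.ofReal_le_ofReal hb
        _ = σ (Metric.thickening (δ + δ) T) := ENNReal.ofReal_toReal (measure_ne_top σ _)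
    have htend : Tendsto (fun δ : ℝ => σ (Metric.thickening δ T)) (nhdsWithin 0 (Set.Ioi 0))
        (nhds (σ T)) :=
      tendsto_measure_thickening_of_isClosed ⟨1, one_pos, measure_ne_top σ _⟩ hT
    have hdd : Tendsto (fun δ : ℝ => δ + δ) (nhdsWithin 0 (Set.Ioi 0))
        (nhdsWithin 0 (Set.Ioi 0)) := by
      apply tendsto_nhdsWithin_of_tendsto_nhds_of_eventually_within
      · have hadd : Tendsto (fun δ : ℝ => δ + δ) (nhds 0) (nhds ((0:ℝ)+0)) :=
          tendsto_id.add tendsto_id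
        simpa using hadd.mono_left nhdsWithin_le_nhds
      · filter_upwards [self_mem_nhdsWithin] with δ hδ'
        have : (0:ℝ) < δ := hδ'
        exact Set.mem_Ioi.2 (by linarith)
    refine ge_of_tendsto (htend.comp hdd) ?_
    filter_upwards [self_mem_nhdsWithin] with δ hδ'
    exact hδb δ hδ'
  -- assemble
  have hPprob : IsProbabilityMeasure P := ⟨hPuniv⟩
  have hfstle : ∀ T : Set (E n), IsClosed T → P (Prod.fst ⁻¹' T) ≤ μ T :=
    hmarg μ Prod.fst continuous_fst (fun k V => hπ2 k V) inferInstance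
  have hsndle : ∀ T : Set (E n), IsClosed T → P (Prod.snd ⁻¹' T) ≤ ν T :=
    hmarg ν Prod.snd continuous_snd (fun k V => hπ3 k V) inferInstance
  have hmapfst : P.map Prod.fst = μ := by
    haveI : IsProbabilityMeasure (P.map Prod.fst) :=
      Measure.isProbabilityMeasure_map measurable_fst.aemeasurable
    refine eq_of_le_on_closed _ _ ?_
    intro T hT
    rw [Measure.map_apply measurable_fst hT.measurableSet]
    exact hfstle T hT
  have hmapsnd : P.map Prod.snd = ν := by
    haveI : IsProbabilityMeasure (P.map Prod.snd) :=
      Measure.isProbabilityMeasure_map measurable_snd.aemeasurable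
    refine eq_of_le_on_closed _ _ ?_
    intro T hT
    rw [Measure.map_apply measurable_snd hT.measurableSet]
    exact hsndle T hT
  exact ⟨P, hPprob, hmapfst, hmapsnd, hΓc⟩
end
end

section
/- Let μ = Σ_{i=1}^{M₁} mᵢ δ_{xᵢ} and ν = Σ_{j=1}^{M₂} nⱼ δ_{yⱼ} be Borel probability measures on ℝⁿ, where mᵢ > 0, nⱼ > 0, the points x₁,…,x_{M₁} are pairwise distinct and the points y₁,…,y_{M₂} are pairwise distinct. Let Γ ⊂ ℝⁿ × ℝⁿ be a closed set such that for every Borel set O ⊂ ℝⁿ one has μ(O) ≤ ν({y : ∃ x ∈ O, (x,y) ∈ Γ}) and ν(O) ≤ μ({x : ∃ y ∈ O, (x,y) ∈ Γ}). Then there exists a Borel probability measure π on ℝⁿ × ℝⁿ with first marginal μ and second marginal ν which is concentrated on Γ, i.e. π((ℝⁿ × ℝⁿ) ∖ Γ) = 0. -/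
open Finset
namespace GaleAux
variable {M₁ M₂ : ℕ}

def rowSum (p : Fin M₁ × Fin M₂ → ℝ) (i : Fin M₁) : ℝ := ∑ j, p (i, j)
def colSum (p : Fin M₁ × Fin M₂ → ℝ) (j : Fin M₂) : ℝ := ∑ i, p (i, j)

def bump (i : Fin M₁) (j : Fin M₂) (δ : ℝ) : Fin M₁ × Fin M₂ → ℝ :=
  fun c => if c = (i, j) then δ else 0

lemma rowSum_add (p q : Fin M₁ × Fin M₂ → ℝ) (i : Fin M₁) :
    rowSum (p + q) i = rowSum p i + rowSum q i := by
  simp [rowSum, Finset.sum_add_distrib]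

lemma colSum_add (p q : Fin M₁ × Fin M₂ → ℝ) (j : Fin M₂) :
    colSum (p + q) j = colSum p j + colSum q j := by
  simp [colSum, Finset.sum_add_distrib]

lemma rowSum_sub (p q : Fin M₁ × Fin M₂ → ℝ) (i : Fin M₁) :
    rowSum (p - q) i = rowSum p i - rowSum q i := by
  simp [rowSum, Finset.sum_sub_distrib]

lemma colSum_sub (p q : Fin M₁ × Fin M₂ → ℝ) (j : Fin M₂) :
    colSum (p - q) j = colSum p j - colSum q j := by
  simp [colSum, Finset.sum_sub_distrib]

lemma rowSum_bump (i : Fin M₁) (j : Fin M₂) (δ : ℝ) (i' : Fin M₁) :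
    rowSum (bump i j δ) i' = if i' = i then δ else 0 := by
  by_cases h : i' = i
  · subst h; simp [rowSum, bump, Prod.ext_iff]
  · simp [rowSum, bump, Prod.ext_iff, h]

lemma colSum_bump (i : Fin M₁) (j : Fin M₂) (δ : ℝ) (j' : Fin M₂) :
    colSum (bump i j δ) j' = if j' = j then δ else 0 := by
  by_cases h : j' = j
  · subst h; simp [colSum, bump, Prod.ext_iff]
  · simp [colSum, bump, Prod.ext_iff, h]

def Feas (R : Fin M₁ → Fin M₂ → Prop) (m : Fin M₁ → ℝ) (p : Fin M₁ × Fin M₂ → ℝ) : Prop :=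
  (∀ c, 0 ≤ p c) ∧ (∀ i j, ¬ R i j → p (i, j) = 0) ∧ (∀ i, rowSum p i ≤ m i)

inductive Reach (R : Fin M₁ → Fin M₂ → Prop) (m : Fin M₁ → ℝ) (p : Fin M₁ × Fin M₂ → ℝ) :
    Fin M₁ ⊕ Fin M₂ → Prop
  | base (i : Fin M₁) : rowSum p i < m i → Reach R m p (Sum.inl i)
  | fwd (i : Fin M₁) (j : Fin M₂) : Reach R m p (Sum.inl i) → R i j → Reach R m p (Sum.inr j)
  | bwd (i : Fin M₁) (j : Fin M₂) : Reach R m p (Sum.inr j) → 0 < p (i, j) → Reach R m p (Sum.inl i)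

def PushGoal (R : Fin M₁ → Fin M₂ → Prop) (m : Fin M₁ → ℝ) (p : Fin M₁ × Fin M₂ → ℝ)
    (ε : ℝ) : Fin M₁ ⊕ Fin M₂ → Prop
  | Sum.inl i => ∃ δ q, 0 < δ ∧ δ ≤ ε ∧ Feas R m q ∧ (∀ c, p c - ε ≤ q c) ∧
      (∀ j', colSum q j' = colSum p j') ∧ rowSum q i ≤ m i - δ
  | Sum.inr j => ∃ δ q, 0 < δ ∧ δ ≤ ε ∧ Feas R m q ∧ (∀ c, p c - ε ≤ q c) ∧
      (∀ j', j' ≠ j → colSum q j' = colSum p j') ∧ colSum q j = colSum p j + δ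

lemma push {R : Fin M₁ → Fin M₂ → Prop} {m : Fin M₁ → ℝ} {p : Fin M₁ × Fin M₂ → ℝ}
    (hp : Feas R m p) {v : Fin M₁ ⊕ Fin M₂} (hv : Reach R m p v) :
    ∀ ε : ℝ, 0 < ε → PushGoal R m p ε v := by
  induction hv with
  | base i h =>
    intro ε hε
    refine ⟨min ε (m i - rowSum p i), p, lt_min hε (by linarith), min_le_left _ _, hp,
      fun c => by linarith, fun j' => rfl, ?_⟩
    have := min_le_right ε (m i - rowSum p i)
    linarith
  | fwd i j hr hR ih =>
    intro ε hε
    obtain ⟨δ, q, hδ, hδε, hq, hlow, hcols, hslack⟩ := ih ε hε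
    refine ⟨δ, q + bump i j δ, hδ, hδε, ⟨?_, ?_, ?_⟩, ?_, ?_, ?_⟩
    · intro c
      have h1 := hq.1 c
      have h2 : (0:ℝ) ≤ bump i j δ c := by
        unfold bump; split <;> linarith
      exact add_nonneg h1 h2
    · intro i' j' hR'
      have hz : bump i j δ (i', j') = 0 := by
        unfold bump
        have : (i', j') ≠ (i, j) := by
          intro hc
          rw [Prod.mk.injEq] at hc
          exact hR' (by rw [hc.1, hc.2]; exact hR)
        simp [this]
      have := hq.2.1 i' j' hR'
      simp [this, hz]
    · intro i'
      rw [rowSum_add, rowSum_bump]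
      by_cases h : i' = i
      · subst h; simpa using by linarith [hslack]
      · simpa [h] using hq.2.2 i'
    · intro c
      have h2 : (0:ℝ) ≤ bump i j δ c := by
        unfold bump; split <;> linarith
      have := hlow c
      simp only [Pi.add_apply]
      linarith
    · intro j' hj'
      rw [colSum_add, colSum_bump]
      simp [hj', hcols j']
    · rw [colSum_add, colSum_bump]
      simp [hcols j]
  | bwd i j hr hpos ih =>
    intro ε hε
    have hpij : 0 < p (i, j) := hpos
    set ε' := min (ε / 2) (p (i, j) / 2) with hε'def
    have hε' : 0 < ε' := lt_min (by linarith) (by linarith)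
    obtain ⟨δ, q, hδ, hδε', hq, hlow, hcols, hcolj⟩ := ih ε' hε'
    have hε'1 : ε' ≤ ε / 2 := min_le_left _ _
    have hε'2 : ε' ≤ p (i, j) / 2 := min_le_right _ _
    have hqij : δ ≤ q (i, j) := by
      have := hlow (i, j)
      linarith
    refine ⟨δ, q - bump i j δ, hδ, by linarith, ⟨?_, ?_, ?_⟩, ?_, ?_, ?_⟩
    · intro c
      simp only [Pi.sub_apply]
      by_cases h : c = (i, j)
      · subst h; simp [bump]; linarith
      · simp [bump, h]; exact hq.1 c
    · intro i' j' hR'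
      have hRij : R i j := by
        by_contra hc
        exact absurd (hp.2.1 i j hc) (by linarith)
      have : (i', j') ≠ (i, j) := by
        intro hc
        rw [Prod.mk.injEq] at hc
        exact hR' (by rw [hc.1, hc.2]; exact hRij)
      simp [bump, this, hq.2.1 i' j' hR']
    · intro i'
      rw [rowSum_sub, rowSum_bump]
      by_cases h : i' = i
      · subst h; simp; linarith [hq.2.2 i']
      · simp [h]; linarith [hq.2.2 i']
    · intro c
      simp only [Pi.sub_apply]
      have hb : ∀ c', c' ≠ (i, j) → bump i j δ c' = 0 := fun c' hc' => if_neg hc'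
      by_cases h : c = (i, j)
      · subst h
        have hb2 : bump i j δ (i, j) = δ := if_pos rfl
        simp only [Pi.sub_apply, hb2]
        have := hlow (i, j)
        linarith
      · simp only [Pi.sub_apply, hb c h]
        have := hlow c
        linarith
    · intro j'
      rw [colSum_sub, colSum_bump]
      by_cases h : j' = j
      · subst h; simp; linarith [hcolj]
      · simp [h, hcols j' h]
    · rw [rowSum_sub, rowSum_bump]
      simp
      linarith [hq.2.2 i]

open scoped Classical in
theorem gale {M₁ M₂ : ℕ} (R : Fin M₁ → Fin M₂ → Prop) (m : Fin M₁ → ℝ) (w : Fin M₂ → ℝ)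
    (hm : ∀ i, 0 ≤ m i) (hw : ∀ j, 0 ≤ w j)
    (hsum : ∑ i, m i = ∑ j, w j)
    (hall : ∀ S : Finset (Fin M₁),
      ∑ i ∈ S, m i ≤ ∑ j ∈ univ.filter (fun j => ∃ i ∈ S, R i j), w j) :
    ∃ p : Fin M₁ × Fin M₂ → ℝ, (∀ c, 0 ≤ p c) ∧ (∀ i j, ¬ R i j → p (i, j) = 0) ∧
      (∀ i, rowSum p i = m i) ∧ (∀ j, colSum p j = w j) := by
  classical
  set X := (Fin M₁ × Fin M₂ → ℝ)
  set K : Set X := {p | Feas R m p ∧ ∀ j, colSum p j ≤ w j} with hKdef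
  have h0K : (0 : X) ∈ K := by
    refine ⟨⟨fun c => le_rfl, fun i j _ => rfl, fun i => ?_⟩, fun j => ?_⟩
    · have h : rowSum (0 : X) i = 0 := by
        show (∑ _j : Fin M₂, (0:ℝ)) = 0
        simp
      rw [h]; exact hm i
    · have h : colSum (0 : X) j = 0 := by
        show (∑ _i : Fin M₁, (0:ℝ)) = 0
        simp
      rw [h]; exact hw j
  have crow : ∀ i, Continuous fun p : X => rowSum p i := fun i =>
    continuous_finset_sum _ fun j _ => continuous_apply _
  have ccol : ∀ j, Continuous fun p : X => colSum p j := fun j =>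
    continuous_finset_sum _ fun i _ => continuous_apply _
  have hKc : IsClosed K := by
    have : K = (⋂ c, {p : X | 0 ≤ p c}) ∩
        ((⋂ i, ⋂ j, {p : X | ¬ R i j → p (i, j) = 0}) ∩
        ((⋂ i, {p : X | rowSum p i ≤ m i}) ∩ (⋂ j, {p : X | colSum p j ≤ w j}))) := by
      ext p
      simp only [hKdef, Set.mem_inter_iff, Set.mem_iInter, Set.mem_setOf_eq, Feas]
      tauto
    rw [this]
    refine IsClosed.inter (isClosed_iInter fun c => isClosed_le continuous_const (continuous_apply c))
      (IsClosed.inter (isClosed_iInter fun i => isClosed_iInter fun j => ?_)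
        (IsClosed.inter (isClosed_iInter fun i => isClosed_le (crow i) continuous_const)
          (isClosed_iInter fun j => isClosed_le (ccol j) continuous_const)))
    by_cases hR : R i j
    · have : {p : X | ¬ R i j → p (i, j) = 0} = Set.univ := by ext p; simp [hR]
      rw [this]; exact isClosed_univ
    · have : {p : X | ¬ R i j → p (i, j) = 0} = {p : X | p (i, j) = 0} := by ext p; simp [hR]
      rw [this]; exact isClosed_eq (continuous_apply _) continuous_const
  have hsub : K ⊆ Set.pi Set.univ (fun _ : Fin M₁ × Fin M₂ => Set.Icc (0 : ℝ) (∑ i, m i)) := by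
    intro p hp c _
    refine ⟨hp.1.1 c, ?_⟩
    calc p c = p (c.1, c.2) := rfl
      _ ≤ rowSum p c.1 :=
        Finset.single_le_sum (f := fun j => p (c.1, j)) (fun j _ => hp.1.1 _) (mem_univ c.2)
      _ ≤ m c.1 := hp.1.2.2 c.1
      _ ≤ ∑ i, m i := Finset.single_le_sum (fun i _ => hm i) (mem_univ c.1)
  have hKcomp : IsCompact K :=
    IsCompact.of_isClosed_subset (isCompact_univ_pi fun _ => isCompact_Icc) hKc hsub
  set F : X → ℝ := fun p => ∑ c, p c with hFdef
  have hFcont : Continuous F := continuous_finset_sum _ fun c _ => continuous_apply c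
  obtain ⟨p₀, hp₀K, hmax⟩ := hKcomp.exists_isMaxOn ⟨0, h0K⟩ hFcont.continuousOn
  have hFrow : ∀ p : X, F p = ∑ i, rowSum p i := fun p => by
    simp only [hFdef, rowSum]; exact Fintype.sum_prod_type p
  have hFcol : ∀ p : X, F p = ∑ j, colSum p j := fun p => by
    rw [hFrow p]; exact Finset.sum_comm
  have hrow_le : ∀ i, rowSum p₀ i ≤ m i := hp₀K.1.2.2
  have hUnsat : ∀ j, Reach R m p₀ (Sum.inr j) → colSum p₀ j = w j := by
    intro j hreach
    by_contra hne
    have hlt2 : colSum p₀ j < w j := lt_of_le_of_ne (hp₀K.2 j) hne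
    obtain ⟨δ, q, hδ, hδε, hq, hlow, hqcols, hqcolj⟩ :=
      push hp₀K.1 hreach (w j - colSum p₀ j) (by linarith)
    have hqK : q ∈ K := by
      refine ⟨hq, fun j' => ?_⟩
      by_cases h : j' = j
      · subst h; rw [hqcolj]; linarith
      · rw [hqcols j' h]; exact hp₀K.2 j'
    have hcs : ∀ j', colSum q j' = colSum p₀ j' + (if j' = j then δ else 0) := by
      intro j'
      by_cases h : j' = j
      · subst h; simp [hqcolj]
      · simp [h, hqcols j' h]
    have hFq : F q = F p₀ + δ := by
      rw [hFcol q, hFcol p₀]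
      simp only [hcs, Finset.sum_add_distrib, Finset.sum_ite_eq' univ j, mem_univ, if_true]
    have h6 : F q ≤ F p₀ := hmax hqK
    linarith
  have hFle : F p₀ ≤ ∑ j, w j := by
    rw [hFcol]; exact Finset.sum_le_sum fun j _ => hp₀K.2 j
  have hnotlt : ¬ F p₀ < ∑ j, w j := by
    intro hlt
    set S : Finset (Fin M₁) := univ.filter fun i => Reach R m p₀ (Sum.inl i) with hSdef
    set T : Finset (Fin M₂) := univ.filter fun j => Reach R m p₀ (Sum.inr j) with hTdef
    have hFrow' : ∑ i, rowSum p₀ i < ∑ i, m i := by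
      rw [← hFrow, hsum]; exact hlt
    obtain ⟨i₀, -, hi₀⟩ := Finset.exists_lt_of_sum_lt hFrow'
    have hi₀S : i₀ ∈ S := mem_filter.2 ⟨mem_univ _, Reach.base i₀ hi₀⟩
    have hNT : ∀ j, (∃ i ∈ S, R i j) → j ∈ T := by
      rintro j ⟨i, hiS, hRij⟩
      exact mem_filter.2 ⟨mem_univ _, Reach.fwd i j (mem_filter.1 hiS).2 hRij⟩
    have e1 : ∑ j ∈ T, w j = ∑ j ∈ T, colSum p₀ j :=
      Finset.sum_congr rfl fun j hj => (hUnsat j (mem_filter.1 hj).2).symm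
    have e2 : ∑ j ∈ T, colSum p₀ j = ∑ i ∈ S, ∑ j ∈ T, p₀ (i, j) := by
      unfold colSum
      rw [Finset.sum_comm]
      refine (Finset.sum_subset (subset_univ S) fun i _ hiS => ?_).symm
      refine Finset.sum_eq_zero fun j hj => ?_
      by_contra hne
      have hpos : 0 < p₀ (i, j) := lt_of_le_of_ne (hp₀K.1.1 _) (Ne.symm hne)
      exact hiS (mem_filter.2 ⟨mem_univ _, Reach.bwd i j (mem_filter.1 hj).2 hpos⟩)
    have e3 : ∑ i ∈ S, ∑ j ∈ T, p₀ (i, j) ≤ ∑ i ∈ S, rowSum p₀ i :=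
      Finset.sum_le_sum fun i _ =>
        Finset.sum_le_sum_of_subset_of_nonneg (subset_univ T) fun j _ _ => hp₀K.1.1 _
    have e4 : ∑ i ∈ S, rowSum p₀ i < ∑ i ∈ S, m i :=
      Finset.sum_lt_sum (fun i _ => hrow_le i) ⟨i₀, hi₀S, hi₀⟩
    have hsubT : univ.filter (fun j => ∃ i ∈ S, R i j) ⊆ T := fun j hj =>
      hNT j (mem_filter.1 hj).2
    have h5 : ∑ j ∈ univ.filter (fun j => ∃ i ∈ S, R i j), w j ≤ ∑ j ∈ T, w j :=
      Finset.sum_le_sum_of_subset_of_nonneg hsubT fun j _ _ => hw j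
    have := hall S
    linarith
  have hFeq : F p₀ = ∑ j, w j := le_antisymm hFle (not_lt.1 hnotlt)
  have hrows : ∀ i, rowSum p₀ i = m i := by
    have hsums : ∑ i, rowSum p₀ i = ∑ i, m i := by rw [← hFrow, hFeq, hsum]
    intro i
    exact (Finset.sum_eq_sum_iff_of_le fun i _ => hrow_le i).1 hsums i (mem_univ i)
  have hcols : ∀ j, colSum p₀ j = w j := by
    have hsums : ∑ j, colSum p₀ j = ∑ j, w j := by rw [← hFcol, hFeq]
    intro j
    exact (Finset.sum_eq_sum_iff_of_le fun j _ => hp₀K.2 j).1 hsums j (mem_univ j)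
  exact ⟨p₀, hp₀K.1.1, hp₀K.1.2.1, hrows, hcols⟩

end GaleAux

open MeasureTheory Set Metric Filter
open scoped RealInnerProductSpace ENNReal

noncomputable section

/-- the coupling existence theorem (statement 2) in the special case where
μ and ν are finite sums of weighted Dirac masses. -/
theorem stmt4 (n M₁ M₂ : ℕ) (m : Fin M₁ → ℝ) (x : Fin M₁ → E n)
    (w : Fin M₂ → ℝ) (y : Fin M₂ → E n)
    (hm : ∀ i, 0 < m i) (hw : ∀ j, 0 < w j)
    (hx : Function.Injective x) (hy : Function.Injective y)
    (μ ν : Measure (E n))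
    (hμ : μ = ∑ i, ENNReal.ofReal (m i) • Measure.dirac (x i))
    (hν : ν = ∑ j, ENNReal.ofReal (w j) • Measure.dirac (y j))
    (hμp : IsProbabilityMeasure μ) (hνp : IsProbabilityMeasure ν)
    (Γ : Set (E n × E n)) (hΓ : IsClosed Γ)
    (h1 : ∀ O : Set (E n), MeasurableSet O → μ O ≤ ν {b : E n | ∃ a ∈ O, (a, b) ∈ Γ})
    (h2 : ∀ O : Set (E n), MeasurableSet O → ν O ≤ μ {a : E n | ∃ b ∈ O, (a, b) ∈ Γ}) :
    ∃ π : Measure (E n × E n), IsProbabilityMeasure π ∧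
      π.map Prod.fst = μ ∧ π.map Prod.snd = ν ∧ π Γᶜ = 0 := by
  classical
  have hμap : ∀ s : Set (E n), μ s = ∑ i, (if x i ∈ s then ENNReal.ofReal (m i) else 0) := by
    intro s
    rw [hμ, Measure.finset_sum_apply]
    refine Finset.sum_congr rfl fun i _ => ?_
    rw [Measure.smul_apply, Measure.dirac_apply, Set.indicator_apply, smul_eq_mul]
    split_ifs <;> simp
  have hνap : ∀ s : Set (E n), ν s = ∑ j, (if y j ∈ s then ENNReal.ofReal (w j) else 0) := by
    intro s
    rw [hν, Measure.finset_sum_apply]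
    refine Finset.sum_congr rfl fun j _ => ?_
    rw [Measure.smul_apply, Measure.dirac_apply, Set.indicator_apply, smul_eq_mul]
    split_ifs <;> simp
  have hm1 : ∑ i, m i = 1 := by
    have h := hμp.measure_univ
    rw [hμap Set.univ] at h
    simp only [Set.mem_univ, if_true] at h
    rw [← ENNReal.ofReal_sum_of_nonneg (fun i _ => (hm i).le)] at h
    exact ENNReal.ofReal_eq_one.1 h
  have hw1 : ∑ j, w j = 1 := by
    have h := hνp.measure_univ
    rw [hνap Set.univ] at h
    simp only [Set.mem_univ, if_true] at h
    rw [← ENNReal.ofReal_sum_of_nonneg (fun j _ => (hw j).le)] at h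
    exact ENNReal.ofReal_eq_one.1 h
  set R : Fin M₁ → Fin M₂ → Prop := fun i j => (x i, y j) ∈ Γ with hRdef
  have hall : ∀ S : Finset (Fin M₁),
      ∑ i ∈ S, m i ≤ ∑ j ∈ Finset.univ.filter (fun j => ∃ i ∈ S, R i j), w j := by
    intro S
    set O : Set (E n) := x '' ↑S with hOdef
    have hOmeas : MeasurableSet O := (Set.Finite.image x S.finite_toSet).measurableSet
    have h := h1 O hOmeas
    have hxiO : ∀ i, x i ∈ O ↔ i ∈ S := by
      intro i
      constructor
      · rintro ⟨k, hk, hke⟩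
        rwa [← hx hke]
      · intro hi; exact ⟨i, hi, rfl⟩
    have hμO : μ O = ENNReal.ofReal (∑ i ∈ S, m i) := by
      rw [hμap O]
      calc ∑ i, (if x i ∈ O then ENNReal.ofReal (m i) else 0)
          = ∑ i, (if i ∈ S then ENNReal.ofReal (m i) else 0) :=
            Finset.sum_congr rfl fun i _ => if_congr (hxiO i) rfl rfl
        _ = ∑ i ∈ S, ENNReal.ofReal (m i) := by
            rw [Finset.sum_ite_mem, Finset.univ_inter]
        _ = ENNReal.ofReal (∑ i ∈ S, m i) :=
            (ENNReal.ofReal_sum_of_nonneg fun i _ => (hm i).le).symm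
    have hyB : ∀ j, (y j ∈ {b : E n | ∃ a ∈ O, (a, b) ∈ Γ}) ↔ (∃ i ∈ S, R i j) := by
      intro j
      constructor
      · rintro ⟨a, ⟨i, hi, rfl⟩, hΓa⟩
        exact ⟨i, hi, hΓa⟩
      · rintro ⟨i, hi, hΓa⟩
        exact ⟨x i, ⟨i, hi, rfl⟩, hΓa⟩
    have hνB : ν {b : E n | ∃ a ∈ O, (a, b) ∈ Γ} =
        ENNReal.ofReal (∑ j ∈ Finset.univ.filter (fun j => ∃ i ∈ S, R i j), w j) := by
      rw [hνap]
      calc ∑ j, (if y j ∈ {b : E n | ∃ a ∈ O, (a, b) ∈ Γ} then ENNReal.ofReal (w j) else 0)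
          = ∑ j, (if (∃ i ∈ S, R i j) then ENNReal.ofReal (w j) else 0) :=
            Finset.sum_congr rfl fun j _ => if_congr (hyB j) rfl rfl
        _ = ∑ j ∈ Finset.univ.filter (fun j => ∃ i ∈ S, R i j), ENNReal.ofReal (w j) :=
            (Finset.sum_filter _ _).symm
        _ = ENNReal.ofReal (∑ j ∈ Finset.univ.filter (fun j => ∃ i ∈ S, R i j), w j) :=
            (ENNReal.ofReal_sum_of_nonneg fun j _ => (hw j).le).symm
    rw [hμO, hνB] at h
    exact (ENNReal.ofReal_le_ofReal_iff (Finset.sum_nonneg fun j _ => (hw j).le)).1 h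
  obtain ⟨p, hp0, hpsupp, hprow, hpcol⟩ :=
    GaleAux.gale R m w (fun i => (hm i).le) (fun j => (hw j).le) (by rw [hm1, hw1]) hall
  set π : Measure (E n × E n) :=
    ∑ c : Fin M₁ × Fin M₂, ENNReal.ofReal (p c) • Measure.dirac (x c.1, y c.2) with hπdef
  have hπap : ∀ s : Set (E n × E n),
      π s = ∑ c : Fin M₁ × Fin M₂, (if (x c.1, y c.2) ∈ s then ENNReal.ofReal (p c) else 0) := by
    intro s
    rw [hπdef, Measure.finset_sum_apply]
    refine Finset.sum_congr rfl fun c _ => ?_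
    rw [Measure.smul_apply, Measure.dirac_apply, Set.indicator_apply, smul_eq_mul]
    split_ifs <;> simp
  have hsump : ∑ c : Fin M₁ × Fin M₂, p c = 1 := by
    calc ∑ c : Fin M₁ × Fin M₂, p c = ∑ i, GaleAux.rowSum p i := Fintype.sum_prod_type p
      _ = ∑ i, m i := Finset.sum_congr rfl fun i _ => hprow i
      _ = 1 := hm1
  have hπuniv : π Set.univ = 1 := by
    rw [hπap]
    simp only [Set.mem_univ, if_true]
    rw [← ENNReal.ofReal_sum_of_nonneg (fun c _ => hp0 c), hsump, ENNReal.ofReal_one]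
  refine ⟨π, ⟨hπuniv⟩, ?_, ?_, ?_⟩
  · ext s hs
    rw [Measure.map_apply measurable_fst hs, hπap, hμap]
    calc ∑ c : Fin M₁ × Fin M₂, (if (x c.1, y c.2) ∈ Prod.fst ⁻¹' s then ENNReal.ofReal (p c) else 0)
        = ∑ i, ∑ j, (if x i ∈ s then ENNReal.ofReal (p (i, j)) else 0) :=
          Fintype.sum_prod_type _
      _ = ∑ i, (if x i ∈ s then ENNReal.ofReal (m i) else 0) := by
          refine Finset.sum_congr rfl fun i _ => ?_
          by_cases hxi : x i ∈ s
          · simp only [if_pos hxi]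
            rw [← hprow i]
            exact (ENNReal.ofReal_sum_of_nonneg fun j _ => hp0 (i, j)).symm
          · simp [hxi]
  · ext s hs
    rw [Measure.map_apply measurable_snd hs, hπap, hνap]
    calc ∑ c : Fin M₁ × Fin M₂, (if (x c.1, y c.2) ∈ Prod.snd ⁻¹' s then ENNReal.ofReal (p c) else 0)
        = ∑ j, ∑ i, (if y j ∈ s then ENNReal.ofReal (p (i, j)) else 0) :=
          Fintype.sum_prod_type_right _
      _ = ∑ j, (if y j ∈ s then ENNReal.ofReal (w j) else 0) := by
          refine Finset.sum_congr rfl fun j _ => ?_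
          by_cases hyj : y j ∈ s
          · simp only [if_pos hyj]
            rw [← hpcol j]
            exact (ENNReal.ofReal_sum_of_nonneg fun i _ => hp0 (i, j)).symm
          · simp [hyj]
  · rw [hπap]
    refine Finset.sum_eq_zero fun c _ => ?_
    by_cases hc : (x c.1, y c.2) ∈ Γ
    · simp [hc]
    · have hz : p c = 0 := hpsupp c.1 c.2 hc
      simp [hz]
end
end

section
/- Let ψ : ℝⁿ → ℝ be convex and let x, x' ∈ ℝⁿ with x ≠ x'. Set ℓ := |x − x'| and ε := −min_{t∈[0,1]} ( ψ((1−t)x + tx') − (1−t)ψ(x) − tψ(x') ) ≥ 0. Then for every z ∈ ∂ψ(x) and every z' ∈ ∂ψ(x'), one has |z − z'| ≥ 2ε/ℓ. -/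
open MeasureTheory Set Metric Filter
open scoped RealInnerProductSpace ENNReal

noncomputable section

/-- subgradients at the two endpoints of a segment on which ψ dips by ε
below the chord must be at distance at least `2ε/ℓ`. -/
theorem stmt19 (n : ℕ) (ψ : E n → ℝ) (hψ : ConvexOn ℝ Set.univ ψ)
    (x x' : E n) (hne : x ≠ x')
    (ℓ : ℝ) (hℓ : ℓ = ‖x - x'‖)
    (ε : ℝ) (hε : ε = - sInf ((fun t : ℝ =>
      ψ ((1 - t) • x + t • x') - ((1 - t) * ψ x + t * ψ x')) '' Icc 0 1)) :
    ∀ z ∈ subdiff ψ x, ∀ z' ∈ subdiff ψ x', 2 * ε / ℓ ≤ ‖z - z'‖ := by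
  intro z hz z' hz'
  have hℓ0 : 0 < ℓ := by
    rw [hℓ]; exact norm_pos_iff.mpr (sub_ne_zero.mpr hne)
  set A : ℝ := ψ x' - ψ x - ⟪z, x' - x⟫ with hA
  set B : ℝ := ψ x - ψ x' - ⟪z', x - x'⟫ with hB
  have hA0 : 0 ≤ A := by have := hz x'; rw [hA]; linarith
  have hB0 : 0 ≤ B := by have := hz' x; rw [hB]; linarith
  have hsum : A + B = ⟪z - z', x - x'⟫ := by
    rw [hA, hB, inner_sub_left]
    have h1 : ⟪z, x' - x⟫ = -⟪z, x - x'⟫ := by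
      rw [← inner_neg_right]; congr 1; abel
    rw [h1]; ring
  have hAB : A + B ≤ ‖z - z'‖ * ℓ := by
    rw [hsum, hℓ]; exact real_inner_le_norm _ _
  have hεle : 2 * ε ≤ A + B := by
    have hne2 : ((fun t : ℝ =>
        ψ ((1 - t) • x + t • x') - ((1 - t) * ψ x + t * ψ x')) '' Icc 0 1).Nonempty :=
      (Set.nonempty_Icc.mpr zero_le_one).image _
    have hlb : -((A + B) / 2) ≤ sInf ((fun t : ℝ =>
        ψ ((1 - t) • x + t • x') - ((1 - t) * ψ x + t * ψ x')) '' Icc 0 1) := by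
      apply le_csInf hne2
      rintro b ⟨t, ht, rfl⟩
      obtain ⟨ht0, ht1⟩ := ht
      have e1 : ((1 - t) • x + t • x') - x = t • (x' - x) := by module
      have e2 : ((1 - t) • x + t • x') - x' = (1 - t) • (x - x') := by module
      have h1 := hz ((1 - t) • x + t • x')
      have h2 := hz' ((1 - t) • x + t • x')
      rw [e1, real_inner_smul_right] at h1
      rw [e2, real_inner_smul_right] at h2
      have htA : t * A ≤ A := by nlinarith
      have htB : (1 - t) * B ≤ B := by nlinarith
      have hfA : -(t * A) ≤ ψ ((1 - t) • x + t • x') - ((1 - t) * ψ x + t * ψ x') := by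
        rw [hA]; nlinarith
      have hfB : -((1 - t) * B) ≤ ψ ((1 - t) • x + t • x') - ((1 - t) * ψ x + t * ψ x') := by
        rw [hB]; nlinarith
      linarith
    rw [hε]; linarith
  rw [div_le_iff₀ hℓ0]
  linarith
end
end
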